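/- For a nonempty set A ⊆ L^n (L = {0,...,l-1}) and positions p₁ ≤ p₂ in [n] and symbols b₁, b₂ ∈ L, the single-deletion intersection |Δ⁻_{p₁,b₁}(A) ∩ Δ⁻_{p₂,b₂}(A)| equals the single-insertion intersection |Δ⁺_{p₁,b₁}(A) ∩ Δ⁺_{p₂+1,b₂}(A)|, where Δ⁻_{p,b}(A) is the set of strings obtained from strings in A by deleting position p when that position equals b, and Δ⁺_{p,b}(A) is the set of strings obtained by inserting b at position p. -/

import Mathlib

/-- Single-deletion set: strings obtained from strings in `A` by deleting
position `p` when that position equals `b`. -/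
def delMinus {l n : ℕ} (p : Fin (n + 1)) (b : Fin l)
    (A : Set (Fin (n + 1) → Fin l)) : Set (Fin n → Fin l) :=
  {x | p.insertNth b x ∈ A}

/-- Single-insertion set: strings obtained by inserting `b` at position `p`
into strings of `A`. -/
def delPlus {l n : ℕ} (p : Fin (n + 1)) (b : Fin l)
    (A : Set (Fin n → Fin l)) : Set (Fin (n + 1) → Fin l) :=
  (fun a => p.insertNth b a) '' A

lemma val_succAbove_eq {n : ℕ} (p : Fin (n + 1)) (i : Fin n) :
    ((p.succAbove i : Fin (n + 1)) : ℕ) = if (i : ℕ) < (p : ℕ) then (i : ℕ) else (i : ℕ) + 1 := by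
  rw [Fin.succAbove]
  rcases lt_or_ge (Fin.castSucc i) p with h | h
  · rw [if_pos h, if_pos (by simpa [Fin.lt_def] using h)]
    simp
  · have h2 : ¬ ((i : ℕ) < (p : ℕ)) := by
      simp only [Fin.le_def, Fin.coe_castSucc] at h
      omega
    rw [if_neg (not_lt.mpr h), if_neg h2]
    simp

lemma succAbove_comm {n : ℕ} (p₁ p₂ : Fin (n + 1)) (hle : p₁ ≤ p₂) (m : Fin n) :
    (p₁.castSucc).succAbove (p₂.succAbove m) = (p₂.succ).succAbove (p₁.succAbove m) := by
  have hle' : (p₁ : ℕ) ≤ (p₂ : ℕ) := hle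
  apply Fin.ext
  simp only [val_succAbove_eq, Fin.coe_castSucc, Fin.val_succ]
  split_ifs <;> omega

lemma insertNth_comm' {l n : ℕ} (p₁ p₂ : Fin (n + 1)) (hle : p₁ ≤ p₂) (b₁ b₂ : Fin l)
    (x : Fin n → Fin l) :
    Fin.insertNth (α := fun _ => Fin l) p₁.castSucc b₁
        (Fin.insertNth (α := fun _ => Fin l) p₂ b₂ x)
      = Fin.insertNth (α := fun _ => Fin l) p₂.succ b₂
        (Fin.insertNth (α := fun _ => Fin l) p₁ b₁ x) := by
  have h12 : p₁.castSucc < p₂.succ := lt_of_le_of_lt (by simpa using hle) (Fin.castSucc_lt_succ : p₂.castSucc < p₂.succ)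
  rw [Fin.insertNth_eq_iff]
  constructor
  · rw [Fin.insertNth_apply_below h12]
    simp
    grind
  · funext k
    refine Fin.succAboveCases p₂ ?_ ?_ k
    · have : p₁.castSucc.succAbove p₂ = p₂.succ :=
        Fin.succAbove_of_le_castSucc _ _ (by simpa using hle)
      simp [Fin.removeNth, this]
    · intro m
      simp [Fin.removeNth, succAbove_comm p₁ p₂ hle m]

theorem stmt0 (l n : ℕ) (A : Set (Fin (n + 1) → Fin l)) (hA : A.Nonempty)
    (p₁ p₂ : Fin (n + 1)) (hle : p₁ ≤ p₂) (b₁ b₂ : Fin l) :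
    (delMinus p₁ b₁ A ∩ delMinus p₂ b₂ A).ncard
      = (delPlus p₁.castSucc b₁ A ∩ delPlus p₂.succ b₂ A).ncard := by
  set f : (Fin n → Fin l) → (Fin (n + 2) → Fin l) :=
    fun x => (p₁.castSucc).insertNth b₁ (p₂.insertNth b₂ x) with hf
  have hinj : Function.Injective f := by
    intro x y h
    have h1 := congrArg (Fin.removeNth p₂) (congrArg (Fin.removeNth p₁.castSucc) h)
    simpa [hf, Fin.removeNth_insertNth] using h1
  have himg : f '' (delMinus p₁ b₁ A ∩ delMinus p₂ b₂ A)
      = delPlus p₁.castSucc b₁ A ∩ delPlus p₂.succ b₂ A := by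
    ext y
    constructor
    · rintro ⟨x, ⟨h1, h2⟩, rfl⟩
      refine ⟨⟨p₂.insertNth b₂ x, h2, rfl⟩, ⟨p₁.insertNth b₁ x, h1, ?_⟩⟩
      exact (insertNth_comm' p₁ p₂ hle b₁ b₂ x).symm
    · rintro ⟨⟨a, ha, rfl⟩, ⟨a', ha', heq0⟩⟩
      have heq : Fin.insertNth (α := fun _ => Fin l) p₂.succ b₂ a'
          = Fin.insertNth (α := fun _ => Fin l) p₁.castSucc b₁ a := heq0
      have hap : a p₂ = b₂ := by
        have h1 : Fin.insertNth (α := fun _ => Fin l) p₁.castSucc b₁ a p₂.succ = a p₂ := by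
          have : p₁.castSucc.succAbove p₂ = p₂.succ :=
            Fin.succAbove_of_le_castSucc _ _ (by simpa using hle)
          rw [← this, Fin.insertNth_apply_succAbove]
        have h2 : Fin.insertNth (α := fun _ => Fin l) p₁.castSucc b₁ a p₂.succ = b₂ := by
          rw [← heq, Fin.insertNth_apply_same]
        rw [← h1, h2]
      set x : Fin n → Fin l := Fin.removeNth p₂ a with hx
      have hax : a = p₂.insertNth b₂ x := by
        rw [hx, Fin.insertNth_removeNth, ← hap, Function.update_eq_self]
      refine ⟨x, ⟨?_, ?_⟩, ?_⟩
      · -- p₁.insertNth b₁ x ∈ A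
        have hy : (p₁.castSucc).insertNth b₁ a = f x := by rw [hax]
        have hcomm := insertNth_comm' p₁ p₂ hle b₁ b₂ x
        have ha'eq : a' = p₁.insertNth b₁ x := by
          have := congrArg (Fin.removeNth p₂.succ) (heq.trans (hy.trans hcomm))
          simpa [Fin.removeNth_insertNth] using this
        show p₁.insertNth b₁ x ∈ A
        rw [← ha'eq]; exact ha'
      · show p₂.insertNth b₂ x ∈ A
        rw [← hax]; exact ha
      · show f x = (p₁.castSucc).insertNth b₁ a
        rw [hax]
  rw [← himg, Set.ncard_image_of_injective _ hinj]
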